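/- Let f: (0,∞) → [0,∞) be monotone nondecreasing and satisfy f(Nτ) ≤ N^m f(τ) for every positive integer N and every τ > 0, for some fixed positive integer m. Then sup_{τ>0} f(τ)/τ^m = lim_{τ→0⁺} f(τ)/τ^m (where both sides may be +∞). -/

import Mathlib

open Filter Topology

/-- If `f : (0,∞) → [0,∞)` is monotone nondecreasing and satisfies `f(Nτ) ≤ N^m f(τ)`
for every positive integer `N` and every `τ > 0`, then
`sup_{τ>0} f(τ)/τ^m = lim_{τ→0⁺} f(τ)/τ^m` (both sides possibly `+∞`, computed in
`ℝ≥0∞`). -/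
theorem sup_eq_limit_abstract (m : ℕ) (hm : 0 < m) (f : ℝ → ℝ)
    (hf0 : ∀ τ : ℝ, 0 < τ → 0 ≤ f τ)
    (hmono : ∀ σ τ : ℝ, 0 < σ → σ ≤ τ → f σ ≤ f τ)
    (hsub : ∀ (N : ℕ), 0 < N → ∀ τ : ℝ, 0 < τ → f (N * τ) ≤ (N : ℝ) ^ m * f τ) :
    Tendsto (fun τ : ℝ => ENNReal.ofReal (f τ / τ ^ m)) (𝓝[>] 0)
      (𝓝 (⨆ τ : {τ : ℝ // 0 < τ}, ENNReal.ofReal (f τ / (τ : ℝ) ^ m))) := by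
  set g : ℝ → ENNReal := fun τ => ENNReal.ofReal (f τ / τ ^ m) with hg
  set S := ⨆ τ : {τ : ℝ // 0 < τ}, ENNReal.ofReal (f τ / (τ : ℝ) ^ m) with hS
  have key : ∀ τ0 τ : ℝ, 0 < τ0 → 0 < τ →
      f τ0 / (τ0 + τ) ^ m ≤ f τ / τ ^ m := by
    intro τ0 τ hτ0 hτ
    set N := ⌈τ0 / τ⌉₊ with hN
    have hNpos : 0 < N := Nat.ceil_pos.mpr (div_pos hτ0 hτ)
    have hle1 : τ0 / τ ≤ (N : ℝ) := Nat.le_ceil _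
    have h1 : τ0 ≤ (N : ℝ) * τ := by
      rw [← div_le_iff₀ hτ] at *
      exact hle1
    have h2 : (N : ℝ) * τ ≤ τ0 + τ := by
      have h := (Nat.ceil_lt_add_one (by positivity : (0:ℝ) ≤ τ0 / τ)).le
      have h' : (N : ℝ) ≤ τ0 / τ + 1 := h
      have := mul_le_mul_of_nonneg_right h' hτ.le
      calc (N : ℝ) * τ ≤ (τ0 / τ + 1) * τ := this
        _ = τ0 + τ := by field_simp
    have hchain : f τ0 ≤ (N : ℝ) ^ m * f τ :=
      le_trans (hmono τ0 ((N : ℝ) * τ) hτ0 h1) (hsub N hNpos τ hτ)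
    have hN2 : (N : ℝ) ^ m ≤ ((τ0 + τ) / τ) ^ m := by
      apply pow_le_pow_left₀ (Nat.cast_nonneg N)
      rw [le_div_iff₀ hτ]
      exact h2
    have hfτ : 0 ≤ f τ := hf0 τ hτ
    have hfin : f τ0 ≤ ((τ0 + τ) / τ) ^ m * f τ :=
      le_trans hchain (mul_le_mul_of_nonneg_right hN2 hfτ)
    rw [div_le_div_iff₀ (by positivity) (by positivity)]
    have h3 : ((τ0 + τ) / τ) ^ m = (τ0 + τ) ^ m / τ ^ m := div_pow _ _ _
    rw [h3] at hfin
    have hτm : (0:ℝ) < τ ^ m := by positivity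
    calc f τ0 * τ ^ m ≤ ((τ0 + τ) ^ m / τ ^ m * f τ) * τ ^ m := by
          exact mul_le_mul_of_nonneg_right hfin hτm.le
      _ = f τ * (τ0 + τ) ^ m := by field_simp
  have hge : S ≤ Filter.liminf g (𝓝[>] (0:ℝ)) := by
    rw [hS]
    apply iSup_le
    rintro ⟨τ0, hτ0⟩
    have hcont : ContinuousAt (fun τ : ℝ => f τ0 / (τ0 + τ) ^ m) 0 := by
      apply ContinuousAt.div continuousAt_const (by fun_prop)
      simp [hτ0.ne']
    have hreal : Tendsto (fun τ : ℝ => f τ0 / (τ0 + τ) ^ m) (𝓝[>] (0:ℝ))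
        (𝓝 (f τ0 / τ0 ^ m)) := by
      have := hcont.tendsto.mono_left (nhdsWithin_le_nhds (s := Set.Ioi (0:ℝ)))
      simpa using this
    have hh : Tendsto (fun τ : ℝ => ENNReal.ofReal (f τ0 / (τ0 + τ) ^ m)) (𝓝[>] (0:ℝ))
        (𝓝 (ENNReal.ofReal (f τ0 / τ0 ^ m))) :=
      (ENNReal.continuous_ofReal.tendsto _).comp hreal
    calc ENNReal.ofReal (f τ0 / τ0 ^ m)
        = liminf (fun τ : ℝ => ENNReal.ofReal (f τ0 / (τ0 + τ) ^ m)) (𝓝[>] (0:ℝ)) :=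
          (hh.liminf_eq).symm
      _ ≤ liminf g (𝓝[>] (0:ℝ)) := by
          refine liminf_le_liminf ?_ (by isBoundedDefault) (by isBoundedDefault)
          filter_upwards [self_mem_nhdsWithin] with τ hτ
          exact ENNReal.ofReal_le_ofReal (key τ0 τ hτ0 hτ)
  have hle : Filter.limsup g (𝓝[>] (0:ℝ)) ≤ S := by
    apply limsup_le_of_le (by isBoundedDefault)
    filter_upwards [self_mem_nhdsWithin] with τ hτ
    exact le_iSup (fun t : {τ : ℝ // 0 < τ} => ENNReal.ofReal (f t / (t : ℝ) ^ m))
      (⟨τ, hτ⟩ : {τ : ℝ // 0 < τ})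
  exact tendsto_of_le_liminf_of_limsup_le hge hle
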